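/- Let F be a set of unary FDs over schema R, let ?A be an uncertain attribute that is not a sink, let Y = (?A)⁺_F ∖ {?A} (nonempty), and suppose no attribute of Y functionally determines ?A under F. Given a CIR U₀ over {?A, B} (with ?A uncertain, B certain), construct U over R by: U[i][?A] = U₀[i][?A]; U[i][C] = U₀[i][B] for every C ∈ Y; and U[i][C] = i (a fresh identifier value) for every C ∈ R ∖ (Y ∪ {?A}). Then samples of U₀ are in probability-preserving bijection with samples of U, and a sample r₀ of U₀ satisfies ?A → B if and only if its extension r₀⁺ satisfies F. Consequently, Pr_{U₀}(?A → B) = Pr_U(F). -/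
import Mathlib


/-- The closure of a set `S` of attributes under a set `F` of unary FDs:
`b ∈ UCl F S` iff `F` implies `S → b`. -/
def UCl {Att : Type} (F : Finset (Att × Att)) (S : Set Att) : Set Att :=
  ⋂₀ {T : Set Att | S ⊆ T ∧ ∀ fd ∈ F, fd.1 ∈ T → fd.2 ∈ T}

lemma ucl_subset {Att : Type} (F : Finset (Att × Att)) (S : Set Att) : S ⊆ UCl F S := by
  intro x hx T hT; exact hT.1 hx

lemma ucl_closed {Att : Type} (F : Finset (Att × Att)) (S : Set Att) :
    ∀ fd ∈ F, fd.1 ∈ UCl F S → fd.2 ∈ UCl F S := by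
  intro fd hfd h1 T hT
  exact hT.2 fd hfd (h1 T hT)

lemma ucl_min {Att : Type} (F : Finset (Att × Att)) (S T : Set Att)
    (hST : S ⊆ T) (hcl : ∀ fd ∈ F, fd.1 ∈ T → fd.2 ∈ T) : UCl F S ⊆ T := by
  intro x hx; exact hx T ⟨hST, hcl⟩

open Classical in
/-- Let `F` be a set of unary FDs over `R`, `?A` an uncertain non-sink
attribute, `Y = (?A)⁺_F ∖ {?A}` its (nonempty) strict closure, and suppose no attribute of `Y`
determines `?A`.  From a CIR `U₀` over `{?A, B}` (cell distributions `p`, certain `B`-values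
`Bval`), build `U` over `R` by keeping the `?A` column, copying the `B` column into every
attribute of `Y`, and putting the fresh identifier value `i` everywhere else (cells `q`,
deterministic outside `?A`).  Then every sample `a` of `U₀` extends uniquely (and
probability-preservingly) to a sample of `U`, the extension satisfies `F` iff `a` satisfies
`?A → B`, and consequently `Pr_{U₀}(?A → B) = Pr_U(F)`. -/
theorem stmt16 {Att V ι : Type} [Fintype Att] [Fintype ι] [Fintype V]
    (attA : Att)
    (F : Finset (Att × Att))
    (hns : UCl F {attA} ≠ {attA})
    (hnd : ∀ C : Att, C ∈ UCl F {attA} → C ≠ attA → attA ∉ UCl F {C})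
    (p : ι → V → ℝ) (Bval : ι → V)
    (hnn : ∀ i v, 0 ≤ p i v) (hsum : ∀ i, ∑ v : V, p i v = 1)
    (q : ι → Att → (V ⊕ ι) → ℝ)
    (hqA : ∀ (i : ι) (v : V), q i attA (Sum.inl v) = p i v)
    (hqA' : ∀ (i t : ι), q i attA (Sum.inr t) = 0)
    (hqY : ∀ (i : ι) (C : Att), C ≠ attA → C ∈ UCl F {attA} →
      ∀ w : V ⊕ ι, q i C w = if w = Sum.inl (Bval i) then 1 else 0)
    (hqO : ∀ (i : ι) (C : Att), C ∉ UCl F {attA} →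
      ∀ w : V ⊕ ι, q i C w = if w = Sum.inr i then 1 else 0) :
    let ext : (ι → V) → ι → Att → (V ⊕ ι) := fun a i C =>
      if C = attA then Sum.inl (a i)
      else if C ∈ UCl F {attA} then Sum.inl (Bval i) else Sum.inr i
    -- per-sample: satisfaction transfers, probabilities agree
    (∀ a : ι → V,
      ((∀ i j : ι, a i = a j → Bval i = Bval j)
        ↔ ∀ fd ∈ F, ∀ i j : ι,
            ext a i fd.1 = ext a j fd.1 → ext a i fd.2 = ext a j fd.2)
      ∧ (∏ i : ι, ∏ C : Att, q i C (ext a i C)) = ∏ i : ι, p i (a i))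
    -- consequently the probabilities of consistency coincide
    ∧ (∑ a ∈ Finset.univ.filter
          (fun a : ι → V => ∀ i j : ι, a i = a j → Bval i = Bval j),
        ∏ i : ι, p i (a i))
      = ∑ s ∈ Finset.univ.filter (fun s : ι → Att → (V ⊕ ι) =>
          ∀ fd ∈ F, ∀ i j : ι, s i fd.1 = s j fd.1 → s i fd.2 = s j fd.2),
        ∏ i : ι, ∏ C : Att, q i C (s i C) := by
  intro ext
  have hAmem : attA ∈ UCl F {attA} := ucl_subset F {attA} rfl
  have extA : ∀ (a : ι → V) (i : ι), ext a i attA = Sum.inl (a i) := by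
    intro a i; simp [ext]
  have extY : ∀ (a : ι → V) (i : ι) (C : Att), C ≠ attA → C ∈ UCl F {attA} →
      ext a i C = Sum.inl (Bval i) := by
    intro a i C h1 h2; simp [ext, h1, h2]
  have extO : ∀ (a : ι → V) (i : ι) (C : Att), C ∉ UCl F {attA} →
      ext a i C = Sum.inr i := by
    intro a i C h2
    have h1 : C ≠ attA := fun h => h2 (h ▸ hAmem)
    simp [ext, h1, h2]
  have part1 : ∀ a : ι → V,
      (∀ i j : ι, a i = a j → Bval i = Bval j)
        ↔ ∀ fd ∈ F, ∀ i j : ι,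
            ext a i fd.1 = ext a j fd.1 → ext a i fd.2 = ext a j fd.2 := by
    intro a
    constructor
    · intro hcons fd hfd i j h1
      by_cases hC : fd.1 ∈ UCl F {attA}
      · have hD : fd.2 ∈ UCl F {attA} := ucl_closed F _ fd hfd hC
        by_cases hCA : fd.1 = attA
        · have haij : a i = a j := by
            rw [hCA, extA, extA] at h1
            exact Sum.inl.inj h1
          have hB : Bval i = Bval j := hcons i j haij
          by_cases hDA : fd.2 = attA
          · rw [hDA, extA, extA, haij]
          · rw [extY a i _ hDA hD, extY a j _ hDA hD, hB]
        · have hD2 : fd.2 ≠ attA := by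
            intro hDA
            have h2 : fd.2 ∈ UCl F {fd.1} :=
              ucl_closed F {fd.1} fd hfd (ucl_subset F {fd.1} rfl)
            exact hnd fd.1 hC hCA (hDA ▸ h2)
          have hB : Bval i = Bval j := by
            rw [extY a i _ hCA hC, extY a j _ hCA hC] at h1
            exact Sum.inl.inj h1
          rw [extY a i _ hD2 hD, extY a j _ hD2 hD, hB]
      · have hij : i = j := by
          rw [extO a i _ hC, extO a j _ hC] at h1
          exact Sum.inr.inj h1
        rw [hij]
    · intro hsat i j hij
      have hsub : UCl F {attA} ⊆ {C | ext a i C = ext a j C} := by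
        apply ucl_min
        · intro x hx
          have hx' : x = attA := hx
          subst hx'
          show ext a i x = ext a j x
          rw [extA, extA, hij]
        · intro fd hfd h1
          exact hsat fd hfd i j h1
      obtain ⟨C, hCcl, hCA⟩ : ∃ C, C ∈ UCl F {attA} ∧ C ≠ attA := by
        by_contra h
        push_neg at h
        apply hns
        apply Set.Subset.antisymm
        · intro x hx
          exact h x hx
        · exact ucl_subset F {attA}
      have hCC : ext a i C = ext a j C := hsub hCcl
      rw [extY a i C hCA hCcl, extY a j C hCA hCcl] at hCC
      exact Sum.inl.inj hCC
  have part2 : ∀ a : ι → V,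
      (∏ i : ι, ∏ C : Att, q i C (ext a i C)) = ∏ i : ι, p i (a i) := by
    intro a
    apply Finset.prod_congr rfl
    intro i _
    rw [Finset.prod_eq_single attA]
    · rw [extA, hqA]
    · intro C _ hCA
      by_cases hC : C ∈ UCl F {attA}
      · rw [extY a i C hCA hC, hqY i C hCA hC]; simp
      · rw [extO a i C hC, hqO i C hC]; simp
    · intro h; exact absurd (Finset.mem_univ attA) h
  refine ⟨fun a => ⟨part1 a, part2 a⟩, ?_⟩
  apply Finset.sum_bij_ne_zero (fun a _ _ => ext a)
  · intro a ha _
    simp only [Finset.mem_filter, Finset.mem_univ, true_and] at ha ⊢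
    exact (part1 a).1 ha
  · intro a _ _ a' _ _ h
    funext i
    have h2 := congrFun (congrFun h i) attA
    rw [extA, extA] at h2
    exact Sum.inl.inj h2
  · intro s hs hg
    simp only [Finset.mem_filter, Finset.mem_univ, true_and] at hs
    have hne : ∀ i C, q i C (s i C) ≠ 0 := by
      intro i C h0
      apply hg
      apply Finset.prod_eq_zero (Finset.mem_univ i)
      exact Finset.prod_eq_zero (Finset.mem_univ C) h0
    have hAex : ∀ i, ∃ v, s i attA = Sum.inl v := by
      intro i
      cases h : s i attA with
      | inl v => exact ⟨v, rfl⟩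
      | inr t => exact absurd (by rw [h]; exact hqA' i t) (hne i attA)
    choose a ha using hAex
    have hse : s = ext a := by
      funext i C
      by_cases hCA : C = attA
      · subst hCA; rw [ha i, extA]
      · by_cases hC : C ∈ UCl F {attA}
        · rw [extY a i C hCA hC]
          by_contra hne'
          exact hne i C (by rw [hqY i C hCA hC]; simp [hne'])
        · rw [extO a i C hC]
          by_contra hne'
          exact hne i C (by rw [hqO i C hC]; simp [hne'])
    have hcons : ∀ i j : ι, a i = a j → Bval i = Bval j :=
      (part1 a).2 (hse ▸ hs)
    refine ⟨a, ?_, ?_, hse.symm⟩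
    · simp only [Finset.mem_filter, Finset.mem_univ, true_and]
      exact hcons
    · rw [← part2 a, ← hse]
      exact hg
  · intro a _ _
    exact (part2 a).symm
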